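/- Let k > m ≥ 1, k even, gcd(4m, 2k+1) = 1, a = 1/(2m), b = (2k+1)/2. Define Φ̃_{s,n} = ∑_{l∈ℤ} Q₂(2l + s/(2m) - 2n/(2k+1)) for 0 ≤ s ≤ 4m-1, 1 ≤ n ≤ 2k, and Ã_{s,n} = Φ̃_{s,n} - Φ̃_{s,2k+1-n}. Then Ã_{s,n} = Ã_{2m-s,n} for all 1 ≤ s ≤ m-1 and 1 ≤ n ≤ k; consequently the (2m-1) × k matrix Ã = [Ã_{s,n}]_{1≤s≤2m-1, 1≤n≤k} has rank at most k-1. -/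
import Mathlib

noncomputable def Fq17 (Q₂ : ℝ → ℝ) (t : ℝ) : ℝ := ∑' l : ℤ, Q₂ (2*l + t)

lemma Fq17_shift (Q₂ : ℝ → ℝ) (t : ℝ) (c : ℤ) : Fq17 Q₂ (t + 2*c) = Fq17 Q₂ t := by
  unfold Fq17
  rw [← (Equiv.addRight c).tsum_eq (fun l : ℤ => Q₂ (2*l + t))]
  exact tsum_congr fun l => by
    simp only [Equiv.coe_addRight]
    congr 1
    push_cast
    ring

lemma Fq17_neg (Q₂ : ℝ → ℝ) (hQ : ∀ x, Q₂ x = if |x| ≤ 1 then 1 - |x| else 0) (t : ℝ) :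
    Fq17 Q₂ (-t) = Fq17 Q₂ t := by
  unfold Fq17
  rw [← (Equiv.neg ℤ).tsum_eq (fun l : ℤ => Q₂ (2*l + t))]
  refine tsum_congr fun l => ?_
  simp only [Equiv.neg_apply]
  rw [hQ, hQ]
  rw [show (2*((-l : ℤ) : ℝ) + t) = -(2*(l:ℝ) + -t) by push_cast; ring, abs_neg]

lemma Fq17_val (Q₂ : ℝ → ℝ) (hQ : ∀ x, Q₂ x = if |x| ≤ 1 then 1 - |x| else 0) (t : ℝ)
    (h0 : 0 ≤ t) (h1 : t ≤ 1) : Fq17 Q₂ t = 1 - t := by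
  unfold Fq17
  rw [tsum_eq_single (0 : ℤ)]
  · rw [show (2*((0:ℤ):ℝ) + t) = t by push_cast; ring, hQ, if_pos (by rw [abs_of_nonneg h0]; exact h1),
      abs_of_nonneg h0]
  · intro l hl
    rw [hQ]
    have hl' : l ≤ -1 ∨ 1 ≤ l := by omega
    rcases hl' with h | h
    · have hc : (l:ℝ) ≤ -1 := by exact_mod_cast h
      split_ifs with hif
      · have := (abs_le.mp hif).1
        rw [abs_of_nonpos (by linarith)]
        linarith
      · rfl
    · have hc : (1:ℝ) ≤ (l:ℝ) := by exact_mod_cast h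
      rw [if_neg]
      have := le_abs_self (2*(l:ℝ) + t)
      push_neg
      linarith

lemma Fq17_key (Q₂ : ℝ → ℝ) (hQ : ∀ x, Q₂ x = if |x| ≤ 1 then 1 - |x| else 0) (x : ℝ) :
    Fq17 Q₂ (1 - x) = 1 - Fq17 Q₂ x := by
  set G : ℝ → ℝ := fun y => Fq17 Q₂ (1 - y) + Fq17 Q₂ y with hG
  have base : ∀ y : ℝ, 0 ≤ y → y ≤ 1 → G y = 1 := by
    intro y h0 h1
    rw [hG]
    simp only
    rw [Fq17_val Q₂ hQ _ (by linarith) (by linarith), Fq17_val Q₂ hQ _ h0 h1]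
    ring
  have per : ∀ (y : ℝ) (c : ℤ), G (y + 2*c) = G y := by
    intro y c
    rw [hG]
    simp only
    rw [show (1 - (y + 2*(c:ℝ))) = (1 - y) + 2*((-c : ℤ) : ℝ) by push_cast; ring,
      Fq17_shift, Fq17_shift]
  have evn : ∀ y : ℝ, G (-y) = G y := by
    intro y
    rw [hG]
    simp only
    rw [Fq17_neg Q₂ hQ y]
    congr 1
    rw [show (1 - -y : ℝ) = -(-1 - y) by ring, Fq17_neg Q₂ hQ,
      show (-1 - y : ℝ) = (1 - y) + 2*((-1 : ℤ) : ℝ) by push_cast; ring, Fq17_shift]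
  have G2 : ∀ y : ℝ, 0 ≤ y → y ≤ 2 → G y = 1 := by
    intro y h0 h2
    rcases le_or_gt y 1 with h | h
    · exact base y h0 h
    · have e1 : y = (y - 2) + 2*((1:ℤ):ℝ) := by push_cast; ring
      rw [e1, per, show (y - 2 : ℝ) = -(2 - y) by ring, evn]
      exact base _ (by linarith) (by linarith)
  have hGx : G x = 1 := by
    have h1 : ((⌊x/2⌋ : ℤ) : ℝ) ≤ x/2 := Int.floor_le _
    have h2 : x/2 < ⌊x/2⌋ + 1 := Int.lt_floor_add_one _
    have e1 : x = (x - 2*(⌊x/2⌋ : ℝ)) + 2*((⌊x/2⌋ : ℤ) : ℝ) := by push_cast; ring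
    rw [e1, per]
    exact G2 _ (by linarith) (by linarith)
  rw [hG] at hGx
  simp only at hGx
  linarith

theorem stmt_17 (k m : ℕ) (hm : 1 ≤ m) (hk : m < k) (hke : Even k)
    (hgcd : Nat.gcd (4*m) (2*k+1) = 1)
    (Q₂ : ℝ → ℝ) (hQ : ∀ x, Q₂ x = if |x| ≤ 1 then 1 - |x| else 0)
    (Φ : ℤ → ℤ → ℝ)
    (hΦ : ∀ s n : ℤ, Φ s n = ∑' l : ℤ, Q₂ (2*l + (s : ℝ)/(2*m) - 2*n/(2*k+1)))
    (A : ℤ → ℤ → ℝ) (hA : ∀ s n : ℤ, A s n = Φ s n - Φ s (2*k+1-n)) :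
    (∀ s n : ℤ, 1 ≤ s → s ≤ m-1 → 1 ≤ n → n ≤ k →
      A s n = A (2*m-s) n) ∧
    Matrix.rank (Matrix.of fun (i : Fin (2*m-1)) (j : Fin k) =>
      A ((i : ℕ)+1) ((j : ℕ)+1)) ≤ k-1 := by
  have hm2 : (2*(m:ℝ)) ≠ 0 := by
    have : (1:ℝ) ≤ (m:ℝ) := by exact_mod_cast hm
    positivity
  have hk2 : (2*(k:ℝ)+1) ≠ 0 := by positivity
  have hPhi : ∀ s n : ℤ, Φ s n = Fq17 Q₂ ((s:ℝ)/(2*m) - 2*n/(2*k+1)) := by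
    intro s n
    rw [hΦ]
    exact tsum_congr fun l => by
      rw [show (2*(l:ℝ) + (s:ℝ)/(2*m) - 2*n/(2*k+1))
          = 2*l + ((s:ℝ)/(2*m) - 2*n/(2*k+1)) by ring]
  have hsym : ∀ s n : ℤ, A s n = A (2*m - s) n := by
    intro s n
    have e1 : Φ s n = Fq17 Q₂ ((s:ℝ)/(2*m) - 2*n/(2*k+1)) := hPhi s n
    have e2 : Φ s (2*k+1-n) = Fq17 Q₂ ((s:ℝ)/(2*m) + 2*n/(2*k+1)) := by
      rw [hPhi]
      rw [show ((s:ℝ)/(2*m) - 2*((2*(k:ℤ)+1-n : ℤ) : ℝ)/(2*k+1))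
          = ((s:ℝ)/(2*m) + 2*n/(2*k+1)) + 2*((-1 : ℤ) : ℝ) by push_cast; field_simp; ring]
      exact Fq17_shift Q₂ _ _
    have e3 : Φ (2*m - s) n = Fq17 Q₂ (1 - ((s:ℝ)/(2*m) + 2*n/(2*k+1))) := by
      rw [hPhi]
      rw [show (((2*(m:ℤ) - s : ℤ) : ℝ)/(2*m) - 2*n/(2*k+1))
          = (1 - ((s:ℝ)/(2*m) + 2*n/(2*k+1))) + 2*((0 : ℤ) : ℝ) by push_cast; field_simp; ring]
      exact Fq17_shift Q₂ _ _
    have e4 : Φ (2*m - s) (2*k+1-n) = Fq17 Q₂ (1 - ((s:ℝ)/(2*m) - 2*n/(2*k+1))) := by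
      rw [hPhi]
      rw [show (((2*(m:ℤ) - s : ℤ) : ℝ)/(2*m) - 2*((2*(k:ℤ)+1-n : ℤ) : ℝ)/(2*k+1))
          = (1 - ((s:ℝ)/(2*m) - 2*n/(2*k+1))) + 2*((-1 : ℤ) : ℝ) by push_cast; field_simp; ring]
      exact Fq17_shift Q₂ _ _
    rw [hA, hA, e1, e2, e3, e4, Fq17_key Q₂ hQ, Fq17_key Q₂ hQ]
    ring
  refine ⟨fun s n _ _ _ _ => hsym s n, ?_⟩
  set σ : Fin (2*m-1) → Fin m := fun i => ⟨min (i:ℕ) (2*m-2-(i:ℕ)), by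
    have := i.isLt; omega⟩ with hσ
  set N : Matrix (Fin m) (Fin k) ℝ :=
    Matrix.of fun (i : Fin m) (j : Fin k) => A ((i:ℕ)+1) ((j:ℕ)+1) with hN
  have hM : (Matrix.of fun (i : Fin (2*m-1)) (j : Fin k) =>
      A ((i : ℕ)+1) ((j : ℕ)+1)) = N.submatrix σ id := by
    ext i j
    simp only [Matrix.of_apply, Matrix.submatrix_apply, id_eq, hN, hσ]
    rcases le_or_gt ((i:ℕ)+1) m with h | h
    · have hmin : min (i:ℕ) (2*m-2-(i:ℕ)) = (i:ℕ) := by omega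
      simp [hmin]
    · have hi := i.isLt
      have hmin : min (i:ℕ) (2*m-2-(i:ℕ)) = 2*m-2-(i:ℕ) := by omega
      simp only [hmin]
      have hc : ((2*m-2-(i:ℕ) : ℕ) : ℤ) + 1 = 2*(m:ℤ) - (((i:ℕ):ℤ) + 1) := by omega
      rw [hc]
      exact hsym _ _
  rw [hM]
  have hfac : N.submatrix σ id
      = ((1 : Matrix (Fin m) (Fin m) ℝ).submatrix σ ⇑(Equiv.refl (Fin m))) * N := by
    rw [Matrix.one_submatrix_mul]
    simp
  rw [hfac]
  refine le_trans (Matrix.rank_mul_le_right _ _) (le_trans N.rank_le_card_height ?_)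
  simp only [Fintype.card_fin]
  omega
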